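/- Let f be a non-empty-valued path-independent choice function on a finite set X. Say a linear order ≤ on X respects f if for every nonempty A ⊆ X the ≤-maximum of A belongs to f(A). Then for every nonempty A ⊆ X and every a ∈ f(A), there exists a linear order ≤ respecting f such that a is the ≤-maximum of A. -/

import Mathlib

open Finset

section Aux
variable {X : Type*} [DecidableEq X]

noncomputable def pickEl (f : Finset X → Finset X) (A : Finset X) (a : X) (T : Finset X) : X :=
  if h : ((f T ∩ T) \ A).Nonempty ∧ a ∈ T then h.1.choose
  else if a ∈ T then a
  else if h : (f T ∩ T).Nonempty then h.choose
  else if h : T.Nonempty then h.choose else a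

theorem pickEl_mem (f : Finset X → Finset X) (A : Finset X) (a : X) (T : Finset X)
    (hT : T.Nonempty) : pickEl f A a T ∈ T := by
  rw [pickEl]
  by_cases h1 : ((f T ∩ T) \ A).Nonempty ∧ a ∈ T
  · rw [dif_pos h1]
    exact (mem_inter.mp (mem_sdiff.mp h1.1.choose_spec).1).2
  · rw [dif_neg h1]
    by_cases h2 : a ∈ T
    · rw [if_pos h2]; exact h2
    · rw [if_neg h2]
      by_cases h3 : (f T ∩ T).Nonempty
      · rw [dif_pos h3]; exact (mem_inter.mp h3.choose_spec).2
      · rw [dif_neg h3, dif_pos hT]; exact hT.choose_spec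

theorem heritage (f : Finset X → Finset X) (hsub : ∀ A, f A ⊆ A)
    (hpi : ∀ A B, f (A ∪ B) = f (f A ∪ B)) {B C : Finset X} (hBC : B ⊆ C) :
    ∀ x ∈ f C, x ∈ B → x ∈ f B := by
  intro x hx hxB
  have h1 : f C = f (f B ∪ C \ B) := by
    conv_lhs => rw [← Finset.union_sdiff_of_subset hBC]
    exact hpi B (C \ B)
  have h2 : x ∈ f B ∪ C \ B := hsub _ (h1 ▸ hx)
  rcases mem_union.mp h2 with h | h
  · exact h
  · exact absurd (mem_sdiff.mp h).2 (not_not.mpr hxB)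

theorem outcast (f : Finset X → Finset X)
    (hpi : ∀ A B, f (A ∪ B) = f (f A ∪ B)) {S T : Finset X}
    (hST : S ⊆ T) (hfT : f T ⊆ S) : f S = f T := by
  have h1 : T ∪ S = T := Finset.union_eq_left.mpr hST
  have h2 : f T ∪ S = S := Finset.union_eq_right.mpr hfT
  calc f S = f (f T ∪ S) := by rw [h2]
    _ = f (T ∪ S) := (hpi T S).symm
    _ = f T := by rw [h1]

theorem pickEl_mem_f (f : Finset X → Finset X) (hsub : ∀ A, f A ⊆ A)
    (hpi : ∀ A B, f (A ∪ B) = f (f A ∪ B))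
    (hne : ∀ A : Finset X, A.Nonempty → (f A).Nonempty)
    (A : Finset X) (a : X) (ha : a ∈ f A) (T : Finset X)
    (hT : T.Nonempty) (hAT : a ∈ T → A ⊆ T) : pickEl f A a T ∈ f T := by
  rw [pickEl]
  by_cases h1 : ((f T ∩ T) \ A).Nonempty ∧ a ∈ T
  · rw [dif_pos h1]
    exact (mem_inter.mp (mem_sdiff.mp h1.1.choose_spec).1).1
  · rw [dif_neg h1]
    by_cases h2 : a ∈ T
    · rw [if_pos h2]
      have hfe : ((f T ∩ T) \ A) = ∅ := by
        by_contra hc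
        exact h1 ⟨nonempty_of_ne_empty hc, h2⟩
      have hfA : f T ⊆ A := by
        intro x hx
        by_contra hxA
        have : x ∈ (f T ∩ T) \ A :=
          mem_sdiff.mpr ⟨mem_inter.mpr ⟨hx, hsub T hx⟩, hxA⟩
        rw [hfe] at this
        exact absurd this (notMem_empty x)
      have := outcast f hpi (hAT h2) hfA
      exact this ▸ ha
    · rw [if_neg h2]
      have h3 : (f T ∩ T).Nonempty := by
        obtain ⟨x, hx⟩ := hne T hT
        exact ⟨x, mem_inter.mpr ⟨hx, hsub T hx⟩⟩
      rw [dif_pos h3]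
      exact (mem_inter.mp h3.choose_spec).1

theorem pickEl_phase1 (f : Finset X → Finset X) (A : Finset X) (a : X) (T : Finset X)
    (haT : a ∈ T) : pickEl f A a T = a ∨ pickEl f A a T ∉ A := by
  rw [pickEl]
  by_cases h1 : ((f T ∩ T) \ A).Nonempty ∧ a ∈ T
  · rw [dif_pos h1]
    exact Or.inr (mem_sdiff.mp h1.1.choose_spec).2
  · rw [dif_neg h1, if_pos haT]
    exact Or.inl rfl

noncomputable def buildL (f : Finset X → Finset X) (A : Finset X) (a : X) :
    ℕ → Finset X → List X
  | 0, _ => []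
  | (n+1), T =>
    if h : T.Nonempty then
      pickEl f A a T :: buildL f A a n (T.erase (pickEl f A a T))
    else []

theorem buildL_spec (f : Finset X → Finset X) (hsub : ∀ A, f A ⊆ A)
    (hpi : ∀ A B, f (A ∪ B) = f (f A ∪ B))
    (hne : ∀ A : Finset X, A.Nonempty → (f A).Nonempty)
    (A : Finset X) (a : X) (ha : a ∈ f A) :
    ∀ n (T : Finset X), T.card ≤ n → (a ∈ T → A ⊆ T) →
      ((buildL f A a n T).Nodup ∧ (∀ x, x ∈ buildL f A a n T ↔ x ∈ T)) ∧
      (∀ B : Finset X, B ⊆ T → ∀ m ∈ B,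
        (∀ b ∈ B, (buildL f A a n T).idxOf m ≤ (buildL f A a n T).idxOf b) → m ∈ f B) ∧
      (a ∈ T → ∀ b ∈ A, (buildL f A a n T).idxOf a ≤ (buildL f A a n T).idxOf b) := by
  intro n
  induction n with
  | zero =>
    intro T hcard hAT
    have hTe : T = ∅ := card_eq_zero.mp (Nat.le_zero.mp hcard)
    subst hTe
    refine ⟨⟨List.nodup_nil, ?_⟩, ?_, ?_⟩
    · intro x; simp [buildL]
    · intro B hB m hm _
      rw [subset_empty.mp hB] at hm
      exact absurd hm (notMem_empty m)
    · intro h; exact absurd h (notMem_empty a)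
  | succ n ih =>
    intro T hcard hAT
    by_cases hT : T.Nonempty
    · set p := pickEl f A a T with hp
      have hpT : p ∈ T := pickEl_mem f A a T hT
      have hpf : p ∈ f T := pickEl_mem_f f hsub hpi hne A a ha T hT hAT
      have hL : buildL f A a (n+1) T = p :: buildL f A a n (T.erase p) := by
        rw [buildL]; simp [hT, hp]
      have hcard' : (T.erase p).card ≤ n := by
        rw [card_erase_of_mem hpT]
        have := card_pos.mpr hT
        omega
      have hAT' : a ∈ T.erase p → A ⊆ T.erase p := by
        intro haT'
        have haT : a ∈ T := mem_of_mem_erase haT'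
        have hpa : p ≠ a := fun h => (ne_of_mem_erase haT') h.symm
        rcases pickEl_phase1 f A a T haT with h | h
        · exact absurd h hpa
        · intro x hx
          refine mem_erase.mpr ⟨?_, hAT haT hx⟩
          intro hxp
          rw [hxp] at hx
          exact h hx
      obtain ⟨⟨hnd, hmem⟩, hmax, hamax⟩ := ih (T.erase p) hcard' hAT'
      set L' := buildL f A a n (T.erase p) with hL'
      refine ⟨⟨?_, ?_⟩, ?_, ?_⟩
      · rw [hL]
        exact List.nodup_cons.mpr ⟨fun h => (mem_erase.mp ((hmem p).mp h)).1 rfl, hnd⟩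
      · intro x
        rw [hL]
        simp only [List.mem_cons, hmem x, mem_erase]
        constructor
        · rintro (rfl | ⟨_, h⟩)
          · exact hpT
          · exact h
        · intro hx
          by_cases hxp : x = p
          · exact Or.inl hxp
          · exact Or.inr ⟨hxp, hx⟩
      · intro B hB m hm hmin
        by_cases hpB : p ∈ B
        · have h0 : (buildL f A a (n+1) T).idxOf p = 0 := by
            rw [hL]; exact List.idxOf_cons_eq L' rfl
          have hm0 : (buildL f A a (n+1) T).idxOf m = 0 :=
            Nat.le_zero.mp (h0 ▸ hmin p hpB)
          have hmp : m = p := by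
            rw [hL] at hm0
            by_contra hmp
            rw [List.idxOf_cons_ne L' (fun h => hmp h.symm)] at hm0
            exact Nat.succ_ne_zero _ hm0
          subst hmp
          exact heritage f hsub hpi hB _ hpf hm
        · have hB' : B ⊆ T.erase p := by
            intro x hx
            refine mem_erase.mpr ⟨?_, hB hx⟩
            intro hxp
            rw [hxp] at hx
            exact hpB hx
          refine hmax B hB' m hm ?_
          intro b hb
          have hbp : b ≠ p := by intro h; rw [h] at hb; exact hpB hb
          have hmp : m ≠ p := by intro h; rw [h] at hm; exact hpB hm
          have h1 : (buildL f A a (n+1) T).idxOf m = L'.idxOf m + 1 := by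
            rw [hL]; exact List.idxOf_cons_ne L' (fun h => hmp h.symm)
          have h2 : (buildL f A a (n+1) T).idxOf b = L'.idxOf b + 1 := by
            rw [hL]; exact List.idxOf_cons_ne L' (fun h => hbp h.symm)
          have := hmin b hb
          omega
      · intro haT b hb
        by_cases hpa : p = a
        · rw [hL, ← hpa, List.idxOf_cons_self]
          exact Nat.zero_le _
        · rcases pickEl_phase1 f A a T haT with h | h
          · exact absurd h hpa
          · have haT' : a ∈ T.erase p := mem_erase.mpr ⟨fun hh => hpa hh.symm, haT⟩
            have hbp : b ≠ p := by intro hh; rw [hh] at hb; exact h hb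
            have h1 : (buildL f A a (n+1) T).idxOf a = L'.idxOf a + 1 := by
              rw [hL]; exact List.idxOf_cons_ne L' hpa
            have h2 : (buildL f A a (n+1) T).idxOf b = L'.idxOf b + 1 := by
              rw [hL]; exact List.idxOf_cons_ne L' (fun hh => hbp hh.symm)
            have := hamax haT' b hb
            omega
    · have hTe : T = ∅ := not_nonempty_iff_eq_empty.mp hT
      subst hTe
      refine ⟨⟨?_, ?_⟩, ?_, ?_⟩
      · rw [buildL]; simp
      · intro x; rw [buildL]; simp
      · intro B hB m hm _
        rw [subset_empty.mp hB] at hm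
        exact absurd hm (notMem_empty m)
      · intro h; exact absurd h (notMem_empty a)

end Aux

theorem respecting_linear_order_exists {X : Type*} [Fintype X] [DecidableEq X]
    (f : Finset X → Finset X)
    (hsub : ∀ A, f A ⊆ A)
    (hpi : ∀ A B, f (A ∪ B) = f (f A ∪ B))
    (hne : ∀ A : Finset X, A.Nonempty → (f A).Nonempty) :
    ∀ A : Finset X, A.Nonempty → ∀ a ∈ f A,
      ∃ r : X → X → Prop, IsLinearOrder X r ∧
        (∀ B : Finset X, ∀ m ∈ B, (∀ b ∈ B, r b m) → m ∈ f B) ∧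
        (∀ b ∈ A, r b a) := by
  intro A hA a ha
  obtain ⟨⟨hnd, hmem⟩, hmax, hamax⟩ :=
    buildL_spec f hsub hpi hne A a ha ((Finset.univ : Finset X).card)
      (Finset.univ : Finset X) le_rfl (fun _ => Finset.subset_univ A)
  set L := buildL f A a (Finset.univ : Finset X).card (Finset.univ : Finset X) with hL
  have hmemL : ∀ x : X, x ∈ L := fun x => (hmem x).mpr (Finset.mem_univ x)
  refine ⟨fun b c => L.idxOf c ≤ L.idxOf b, ?_, ?_, ?_⟩
  · refine { refl := ?_, trans := ?_, antisymm := ?_, total := ?_ }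
    · exact fun x => le_rfl
    · exact fun x y z h1 h2 => le_trans h2 h1
    · intro x y h1 h2
      have : L.idxOf x = L.idxOf y := le_antisymm h2 h1
      exact ((List.idxOf_inj (hmemL x)).mp this)
    · exact fun x y => le_total (L.idxOf y) (L.idxOf x)
  · intro B m hm hmin
    exact hmax B (Finset.subset_univ B) m hm hmin
  · exact hamax (Finset.mem_univ a)
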